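/- Gumbel-max trick (used as the basis for the paper's continuous relaxation of categorical sampling): let d ≥ 1, let p_1, …, p_d > 0 with Σ_i p_i = 1, let U_1, …, U_d be i.i.d. Uniform(0,1) random variables and set G_i = −log(−log U_i). Then almost surely the vector (log p_1 + G_1, …, log p_d + G_d) has a unique maximizing index, and for every j ∈ {1,…,d}, P( log p_j + G_j > log p_i + G_i for all i ≠ j ) = p_j; i.e., the argmax is distributed according to the categorical distribution with probabilities (p_1, …, p_d). -/

import Mathlib

open MeasureTheory ProbabilityTheory Filter


lemma slice_measure {a b t : ℝ} (ha : 0 < a) (hb : 0 < b) (ht : t ∈ Set.Ioo (0:ℝ) 1) :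
    (volume.restrict (Set.Ioo (0:ℝ) 1))
      {s : ℝ | Real.log a + -Real.log (-Real.log s) < Real.log b + -Real.log (-Real.log t)} =
      ENNReal.ofReal (t ^ (a / b)) := by
  obtain ⟨ht0, ht1⟩ := ht
  have hlt : 0 < -Real.log t := by
    have := Real.log_neg ht0 ht1
    linarith
  have hab : 0 < a / b := div_pos ha hb
  have hpow1 : t ^ (a / b) ≤ 1 := Real.rpow_le_one (le_of_lt ht0) (le_of_lt ht1) hab.le
  have hpow0 : 0 < t ^ (a / b) := Real.rpow_pos_of_pos ht0 _
  rw [Measure.restrict_apply' measurableSet_Ioo]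
  have hset : {s : ℝ | Real.log a + -Real.log (-Real.log s) < Real.log b + -Real.log (-Real.log t)}
      ∩ Set.Ioo (0:ℝ) 1 = Set.Ioo 0 (t ^ (a / b)) := by
    ext s
    simp only [Set.mem_inter_iff, Set.mem_setOf_eq, Set.mem_Ioo]
    constructor
    · rintro ⟨hcond, hs0, hs1⟩
      have hls : 0 < -Real.log s := by have := Real.log_neg hs0 hs1; linarith
      refine ⟨hs0, ?_⟩
      -- from hcond deduce s < t ^ (a/b)
      have h1 : Real.log a + Real.log (-Real.log t) < Real.log b + Real.log (-Real.log s) := by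
        linarith
      have h2 : Real.log (a * (-Real.log t)) < Real.log (b * (-Real.log s)) := by
        rwa [Real.log_mul ha.ne' hlt.ne', Real.log_mul hb.ne' hls.ne']
      have h3 : a * (-Real.log t) < b * (-Real.log s) :=
        (Real.log_lt_log_iff (by positivity) (by positivity)).mp h2
      have h4 : (a / b) * Real.log t > Real.log s := by
        rw [div_mul_eq_mul_div, gt_iff_lt, lt_div_iff₀ hb]
        nlinarith
      have h5 : s < Real.exp ((a / b) * Real.log t) := by
        calc s = Real.exp (Real.log s) := (Real.exp_log hs0).symm
        _ < _ := Real.exp_lt_exp.mpr h4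
      rwa [mul_comm, ← Real.rpow_def_of_pos ht0] at h5
    · rintro ⟨hs0, hst⟩
      have hs1 : s < 1 := lt_of_lt_of_le hst hpow1
      have hls : 0 < -Real.log s := by have := Real.log_neg hs0 hs1; linarith
      refine ⟨?_, hs0, hs1⟩
      have h5 : Real.log s < (a / b) * Real.log t := by
        calc Real.log s < Real.log (t ^ (a/b)) := Real.log_lt_log hs0 hst
        _ = (a/b) * Real.log t := Real.log_rpow ht0 _
      have h3 : a * (-Real.log t) < b * (-Real.log s) := by
        rw [div_mul_eq_mul_div, lt_div_iff₀ hb] at h5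
        nlinarith
      have h2 : Real.log (a * (-Real.log t)) < Real.log (b * (-Real.log s)) :=
        Real.log_lt_log (by positivity) h3
      rw [Real.log_mul ha.ne' hlt.ne', Real.log_mul hb.ne' hls.ne'] at h2
      linarith
  rw [hset, Real.volume_Ioo, sub_zero]

lemma gumbel_key {n : ℕ} (p : Fin (n+1) → ℝ) (hp : ∀ i, 0 < p i) (hpsum : ∑ i, p i = 1)
    (j : Fin (n+1)) :
    (Measure.pi fun _ : Fin (n+1) => volume.restrict (Set.Ioo (0:ℝ) 1))
      {x : Fin (n+1) → ℝ | ∀ i, i ≠ j → Real.log (p i) + -Real.log (-Real.log (x i)) <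
        Real.log (p j) + -Real.log (-Real.log (x j))} = ENNReal.ofReal (p j) := by
  set ν : Measure ℝ := volume.restrict (Set.Ioo (0:ℝ) 1) with hν
  haveI : IsProbabilityMeasure ν := ⟨by simp [hν, Real.volume_Ioo]⟩
  have hf : Measurable (fun s : ℝ => -Real.log (-Real.log s)) :=
    (Real.measurable_log.comp Real.measurable_log.neg).neg
  -- sum facts
  have hsum' : ∑ k, p (j.succAbove k) = 1 - p j := by
    have h := Fin.sum_univ_succAbove p j
    rw [hpsum] at h; linarith
  have hpj1 : p j ≤ 1 := by
    have : (0:ℝ) ≤ ∑ k, p (j.succAbove k) :=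
      Finset.sum_nonneg fun k _ => (hp _).le
    linarith
  set r : ℝ := (1 - p j) / p j with hr
  have hr0 : 0 ≤ r := div_nonneg (by linarith) (hp j).le
  have hr1 : r + 1 = 1 / p j := by rw [hr]; field_simp [(hp j).ne']; ring
  -- the set and its measurability
  set S : Set (Fin (n+1) → ℝ) :=
    {x | ∀ i, i ≠ j → Real.log (p i) + -Real.log (-Real.log (x i)) <
        Real.log (p j) + -Real.log (-Real.log (x j))} with hSdef
  have hS : MeasurableSet S := by
    have : S = ⋂ i, ⋂ (_ : i ≠ j),
        {x : Fin (n+1) → ℝ | Real.log (p i) + -Real.log (-Real.log (x i)) <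
          Real.log (p j) + -Real.log (-Real.log (x j))} := by
      ext x; simp [hSdef, Set.mem_iInter]
    rw [this]
    exact MeasurableSet.iInter fun i => MeasurableSet.iInter fun _ =>
      measurableSet_lt ((hf.comp (measurable_pi_apply i)).const_add _)
        ((hf.comp (measurable_pi_apply j)).const_add _)
  -- transfer to product measure
  set S' : Set (ℝ × (Fin n → ℝ)) :=
    {q | ∀ k, Real.log (p (j.succAbove k)) + -Real.log (-Real.log (q.2 k)) <
        Real.log (p j) + -Real.log (-Real.log q.1)} with hS'def
  have hS' : MeasurableSet S' := by
    have : S' = ⋂ k, {q : ℝ × (Fin n → ℝ) |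
        Real.log (p (j.succAbove k)) + -Real.log (-Real.log (q.2 k)) <
          Real.log (p j) + -Real.log (-Real.log q.1)} := by
      ext q; simp [hS'def, Set.mem_iInter]
    rw [this]
    exact MeasurableSet.iInter fun k =>
      measurableSet_lt ((hf.comp ((measurable_pi_apply k).comp measurable_snd)).const_add _)
        ((hf.comp measurable_fst).const_add _)
  have hpre : (MeasurableEquiv.piFinSuccAbove (fun _ : Fin (n+1) => ℝ) j).symm ⁻¹' S = S' := by
    ext ⟨t, y⟩
    simp only [Set.mem_preimage, MeasurableEquiv.piFinSuccAbove_symm_apply,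
      Fin.insertNthEquiv, Equiv.coe_fn_mk, hSdef, hS'def, Set.mem_setOf_eq]
    constructor
    · intro h k
      have := h (j.succAbove k) (Fin.succAbove_ne j k)
      simpa [Fin.insertNth_apply_succAbove, Fin.insertNth_apply_same] using this
    · intro h i hi
      obtain ⟨k, rfl⟩ := Fin.exists_succAbove_eq hi
      simpa [Fin.insertNth_apply_succAbove, Fin.insertNth_apply_same] using h k
  have hmp := (measurePreserving_piFinSuccAbove (fun _ : Fin (n+1) => ν) j).symm
  have hmeas_eq : (Measure.pi fun _ : Fin (n+1) => ν) S = (ν.prod (Measure.pi fun _ : Fin n => ν)) S' := by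
    rw [← hpre, hmp.measure_preimage hS.nullMeasurableSet]
  rw [hmeas_eq, Measure.prod_apply hS']
  -- compute slices
  have hslice : ∀ t ∈ Set.Ioo (0:ℝ) 1,
      (Measure.pi fun _ : Fin n => ν) (Prod.mk t ⁻¹' S') = ENNReal.ofReal (t ^ r) := by
    intro t ht
    have : Prod.mk t ⁻¹' S' = Set.univ.pi fun k : Fin n =>
        {s : ℝ | Real.log (p (j.succAbove k)) + -Real.log (-Real.log s) <
          Real.log (p j) + -Real.log (-Real.log t)} := by
      ext y; simp [hS'def, Set.mem_pi]
    rw [this, Measure.pi_pi]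
    have heach : ∀ k : Fin n, ν {s : ℝ | Real.log (p (j.succAbove k)) + -Real.log (-Real.log s) <
        Real.log (p j) + -Real.log (-Real.log t)} =
        ENNReal.ofReal (t ^ (p (j.succAbove k) / p j)) := fun k =>
      slice_measure (hp _) (hp j) ht
    simp_rw [heach]
    rw [← ENNReal.ofReal_prod_of_nonneg (fun k _ => (Real.rpow_pos_of_pos ht.1 _).le),
      ← Real.rpow_sum_of_pos ht.1, ← Finset.sum_div, hsum']
  rw [show (fun t => (Measure.pi fun _ : Fin n => ν) (Prod.mk t ⁻¹' S')) =
      fun t => (Measure.pi fun _ : Fin n => ν) (Prod.mk t ⁻¹' S') from rfl]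
  calc ∫⁻ t, (Measure.pi fun _ : Fin n => ν) (Prod.mk t ⁻¹' S') ∂ν
      = ∫⁻ t in Set.Ioo (0:ℝ) 1, ENNReal.ofReal (t ^ r) := by
        rw [hν]
        exact setLIntegral_congr_fun measurableSet_Ioo (fun t ht => hslice t ht)
    _ = ENNReal.ofReal (p j) := by
        have hint : IntegrableOn (fun t : ℝ => t ^ r) (Set.Ioo 0 1) := by
          have h : IntervalIntegrable (fun x : ℝ => x ^ r) volume 0 1 :=
            intervalIntegral.intervalIntegrable_rpow' (by linarith)
          rw [intervalIntegrable_iff_integrableOn_Ioo_of_le (by norm_num)] at h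
          exact h
        rw [← ofReal_integral_eq_lintegral_ofReal hint
          ((ae_restrict_mem measurableSet_Ioo).mono fun t ht => (Real.rpow_pos_of_pos ht.1 _).le)]
        congr 1
        rw [← integral_Ioc_eq_integral_Ioo, ← intervalIntegral.integral_of_le (by norm_num : (0:ℝ) ≤ 1),
          integral_rpow (Or.inl (by linarith))]
        rw [Real.one_rpow, Real.zero_rpow (by rw [hr1]; exact (one_div_pos.mpr (hp j)).ne'), hr1]
        field_simp
        ring


lemma gumbel_S_meas {d : ℕ} (p : Fin d → ℝ) (j : Fin d) :
    MeasurableSet {x : Fin d → ℝ | ∀ i, i ≠ j →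
      Real.log (p i) + -Real.log (-Real.log (x i)) <
        Real.log (p j) + -Real.log (-Real.log (x j))} := by
  have hf : Measurable (fun s : ℝ => -Real.log (-Real.log s)) :=
    (Real.measurable_log.comp Real.measurable_log.neg).neg
  have : {x : Fin d → ℝ | ∀ i, i ≠ j →
      Real.log (p i) + -Real.log (-Real.log (x i)) <
        Real.log (p j) + -Real.log (-Real.log (x j))} = ⋂ i, ⋂ (_ : i ≠ j),
      {x : Fin d → ℝ | Real.log (p i) + -Real.log (-Real.log (x i)) <
        Real.log (p j) + -Real.log (-Real.log (x j))} := by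
    ext x; simp [Set.mem_iInter]
  rw [this]
  exact MeasurableSet.iInter fun i => MeasurableSet.iInter fun _ =>
    measurableSet_lt ((hf.comp (measurable_pi_apply i)).const_add _)
      ((hf.comp (measurable_pi_apply j)).const_add _)

/-- **The Gumbel-max trick.** Let `p₁, …, p_d > 0` with `Σ_i p_i = 1`, let
`U₁, …, U_d` be i.i.d. `Uniform(0,1)` random variables and set
`G_i = −log(−log U_i)` (so each `G_i` is `Gumbel(0,1)`). Then almost surely the vector
`(log p₁ + G₁, …, log p_d + G_d)` has a unique maximizing index, and for every `j`,
`P(log p_j + G_j > log p_i + G_i for all i ≠ j) = p_j`; i.e. the argmax is distributed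
according to the categorical distribution with probabilities `(p₁, …, p_d)`. -/
theorem gumbel_max_trick {d : ℕ} (hd : 1 ≤ d)
    {Ω : Type*} [MeasurableSpace Ω] (μ : Measure Ω) [IsProbabilityMeasure μ]
    (p : Fin d → ℝ) (hp : ∀ i, 0 < p i) (hpsum : ∑ i, p i = 1)
    (U : Fin d → Ω → ℝ) (hUmeas : ∀ i, Measurable (U i))
    (hUindep : iIndepFun U μ)
    (hUunif : ∀ i, μ.map (U i) = volume.restrict (Set.Ioo (0 : ℝ) 1))
    (G : Fin d → Ω → ℝ) (hG : ∀ i ω, G i ω = -Real.log (-Real.log (U i ω))) :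
    (∀ᵐ ω ∂μ, ∃! j : Fin d,
        ∀ i, i ≠ j → Real.log (p i) + G i ω < Real.log (p j) + G j ω) ∧
    (∀ j : Fin d,
        μ {ω | ∀ i, i ≠ j → Real.log (p i) + G i ω < Real.log (p j) + G j ω} =
          ENNReal.ofReal (p j)) := by
  obtain ⟨n, rfl⟩ : ∃ n, d = n + 1 := ⟨d - 1, by omega⟩
  set ν : Measure ℝ := volume.restrict (Set.Ioo (0:ℝ) 1) with hν
  haveI : IsProbabilityMeasure ν := ⟨by simp [hν, Real.volume_Ioo]⟩
  have hT : Measurable (fun ω (i : Fin (n+1)) => U i ω) :=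
    measurable_pi_lambda _ hUmeas
  have hmap : μ.map (fun ω (i : Fin (n+1)) => U i ω) = Measure.pi fun _ => ν := by
    refine (Measure.pi_eq fun s hs => ?_).symm
    rw [Measure.map_apply hT (MeasurableSet.univ_pi hs)]
    have hpre : (fun ω (i : Fin (n+1)) => U i ω) ⁻¹' Set.univ.pi s =
        ⋂ i ∈ Finset.univ, U i ⁻¹' s i := by
      ext ω; simp [Set.mem_pi]
    rw [hpre, hUindep.measure_inter_preimage_eq_mul Finset.univ (fun i _ => hs i)]
    refine Finset.prod_congr rfl fun i _ => ?_
    rw [← Measure.map_apply (hUmeas i) (hs i), hUunif i]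
  have hset : ∀ j : Fin (n+1),
      {ω | ∀ i, i ≠ j → Real.log (p i) + G i ω < Real.log (p j) + G j ω} =
      (fun ω (i : Fin (n+1)) => U i ω) ⁻¹'
        {x : Fin (n+1) → ℝ | ∀ i, i ≠ j →
          Real.log (p i) + -Real.log (-Real.log (x i)) <
            Real.log (p j) + -Real.log (-Real.log (x j))} := by
    intro j; ext ω; simp [hG]
  have part2 : ∀ j : Fin (n+1),
      μ {ω | ∀ i, i ≠ j → Real.log (p i) + G i ω < Real.log (p j) + G j ω} =
        ENNReal.ofReal (p j) := by
    intro j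
    rw [hset j, ← Measure.map_apply hT (gumbel_S_meas p j), hmap,
      gumbel_key p hp hpsum j]
  refine ⟨?_, part2⟩
  set E : Fin (n+1) → Set Ω := fun j =>
    {ω | ∀ i, i ≠ j → Real.log (p i) + G i ω < Real.log (p j) + G j ω} with hE
  have hEmeas : ∀ j, MeasurableSet (E j) := by
    intro j
    rw [hE]; simp only
    rw [hset j]
    exact hT (gumbel_S_meas p j)
  have hdisj : Pairwise (Function.onFun Disjoint E) := by
    intro j k hjk
    rw [Function.onFun, Set.disjoint_left]
    intro ω hj hk
    exact lt_asymm (hj k (Ne.symm hjk)) (hk j hjk)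
  have hunion : μ (⋃ j, E j) = 1 := by
    rw [measure_iUnion hdisj hEmeas, tsum_fintype]
    have : ∀ j, μ (E j) = ENNReal.ofReal (p j) := part2
    simp_rw [this]
    rw [← ENNReal.ofReal_sum_of_nonneg (fun i _ => (hp i).le), hpsum,
      ENNReal.ofReal_one]
  have hsub : (⋃ j, E j) ⊆ {ω | ∃! j : Fin (n+1),
      ∀ i, i ≠ j → Real.log (p i) + G i ω < Real.log (p j) + G j ω} := by
    intro ω hω
    obtain ⟨j, hj⟩ := Set.mem_iUnion.mp hω
    refine ⟨j, hj, fun k hk => ?_⟩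
    by_contra hne
    exact lt_asymm (hk j (Ne.symm hne)) (hj k hne)
  have h0 : μ (⋃ j, E j)ᶜ = 0 := by
    rw [measure_compl (MeasurableSet.iUnion hEmeas) (measure_ne_top _ _), hunion,
      measure_univ, tsub_self]
  rw [ae_iff]
  exact measure_mono_null (fun ω hω hmem => hω (hsub hmem)) h0
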